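/- There exists N such that for every integer n ≥ N, t(n,2) ≥ n·log₂ n − 4n·log₂ log₂ n − 2n; equivalently, every 2-rainbow connected graph of sufficiently large order n has at least n·log₂ n − 4n·log₂ log₂ n − 2n edges. -/

import Mathlib

/-- An edge-coloring with `k` colors (adjacent edges may receive the same color) is a
`k`-rainbow connected coloring if every two distinct vertices are joined by a path whose
edges all receive distinct colors; `G` is `k`-rainbow connected if such a coloring exists. -/
def IsRainbowConnected {V : Type*} (G : SimpleGraph V) (k : ℕ) : Prop :=
  ∃ c : Sym2 V → Fin k, ∀ u v : V, u ≠ v →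
    ∃ p : G.Walk u v, p.IsPath ∧ (p.edges.map c).Nodup

/-- `minRainbowEdges n d` is `t(n,d)`: the minimum number of edges among
all graphs of order `n` that are `d`-rainbow connected. -/
noncomputable def minRainbowEdges (n d : ℕ) : ℕ :=
  sInf {m | ∃ G : SimpleGraph (Fin n), G.edgeSet.ncard = m ∧ IsRainbowConnected G d}

open Finset

variable {n : ℕ}

/-- number of functions agreeing with σ on A -/
lemma card_forced (A : Finset (Fin n)) (σ : Fin n → Fin 2) :
    (Finset.univ.filter (fun f : Fin n → Fin 2 => ∀ w ∈ A, f w = σ w)).card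
      = 2 ^ (n - A.card) := by
  rw [← Fintype.card_subtype]
  let e : {f : Fin n → Fin 2 // ∀ w ∈ A, f w = σ w} ≃ ((Aᶜ : Finset (Fin n)) → Fin 2) :=
    { toFun := fun f w => f.1 w.1
      invFun := fun g => ⟨fun w => if h : w ∈ A then σ w else g ⟨w, Finset.mem_compl.mpr h⟩,
        fun w hw => by simp [hw]⟩
      left_inv := fun f => by
        ext w
        by_cases h : w ∈ A
        · simp [h, (f.2 w h).symm]
        · simp [h]
      right_inv := fun g => by
        ext w
        have hw : ¬ (w : Fin n) ∈ A := Finset.mem_compl.mp w.2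
        simp [hw] }
  rw [Fintype.card_congr e]
  simp [Finset.card_compl]

/-- summing the forced-function counts over a family -/
lemma sum_pow_le (L : Finset (Fin n)) (s : Fin n → Finset (Fin n))
    (σ : Fin n → Fin n → Fin 2) (B : ℕ)
    (hB : ∀ f : Fin n → Fin 2,
      (L.filter (fun v => ∀ w ∈ s v, f w = σ v w)).card ≤ B) :
    ∑ v ∈ L, 2 ^ (n - (s v).card) ≤ 2 ^ n * B := by
  have key : ∑ v ∈ L, 2 ^ (n - (s v).card)
      = ∑ f : Fin n → Fin 2, (L.filter (fun v => ∀ w ∈ s v, f w = σ v w)).card := by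
    have : ∀ v ∈ L, 2 ^ (n - (s v).card)
        = (Finset.univ.filter (fun f : Fin n → Fin 2 => ∀ w ∈ s v, f w = σ v w)).card := by
      intro v _
      rw [card_forced (s v) (σ v)]
    rw [Finset.sum_congr rfl this]
    simp only [Finset.card_filter]
    rw [Finset.sum_comm]
  rw [key]
  calc ∑ f : Fin n → Fin 2, (L.filter (fun v => ∀ w ∈ s v, f w = σ v w)).card
      ≤ ∑ _f : Fin n → Fin 2, B := Finset.sum_le_sum (fun f _ => hB f)
    _ = 2 ^ n * B := by simp [Finset.card_univ, mul_comm]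

def Cov (G : SimpleGraph (Fin n)) (c : Sym2 (Fin n) → Fin 2) : Prop :=
  ∀ u v : Fin n, u ≠ v → G.Adj u v ∨
    ∃ w, G.Adj u w ∧ G.Adj w v ∧ c s(u, w) ≠ c s(w, v)

variable (G : SimpleGraph (Fin n)) [DecidableRel G.Adj]

/-- full survivor sets are small: survivors are pairwise adjacent -/
lemma surv_card_le_full (c : Sym2 (Fin n) → Fin 2) (hcov : Cov G c)
    (τ : ℕ) (hτ : 1 ≤ τ) (f : Fin n → Fin 2) :
    ((Finset.univ.filter (fun v => G.degree v < τ)).filter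
      (fun v => ∀ w ∈ G.neighborFinset v, f w = c s(v, w))).card ≤ τ := by
  set L := Finset.univ.filter (fun v : Fin n => G.degree v < τ) with hL
  set S := L.filter (fun v => ∀ w ∈ G.neighborFinset v, f w = c s(v, w)) with hS
  rcases S.eq_empty_or_nonempty with h | ⟨v₀, hv₀⟩
  · simp [h]
  · have hsub : S ⊆ insert v₀ (G.neighborFinset v₀) := by
      intro v hv
      by_cases hvv : v = v₀
      · simp [hvv]
      · rcases hcov v₀ v (Ne.symm hvv) with hadj | ⟨w, hw1, hw2, hw3⟩
        · exact Finset.mem_insert_of_mem (by simpa [SimpleGraph.mem_neighborFinset] using hadj)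
        · exfalso
          have h0 : f w = c s(v₀, w) := by
            have := (Finset.mem_filter.mp hv₀).2
            exact this w (by simpa [SimpleGraph.mem_neighborFinset] using hw1)
          have h1 : f w = c s(v, w) := by
            have := (Finset.mem_filter.mp hv).2
            exact this w (by simpa [SimpleGraph.mem_neighborFinset] using hw2.symm)
          rw [Sym2.eq_swap] at h1
          exact hw3 (h0 ▸ h1)
    have hd : G.degree v₀ < τ := by
      have := Finset.mem_filter.mp ((Finset.mem_filter.mp hv₀).1)
      simpa using this.2
    calc S.card ≤ (insert v₀ (G.neighborFinset v₀)).card := Finset.card_le_card hsub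
      _ ≤ (G.neighborFinset v₀).card + 1 := Finset.card_insert_le _ _
      _ = G.degree v₀ + 1 := by rw [SimpleGraph.card_neighborFinset_eq_degree]
      _ ≤ τ := by omega

/-- high-constraint survivor sets are small -/
lemma surv_card_le_high (c : Sym2 (Fin n) → Fin 2) (hcov : Cov G c)
    (τ : ℕ) (hτ : 1 ≤ τ) (f : Fin n → Fin 2) :
    ((Finset.univ.filter (fun v => G.degree v < τ)).filter
      (fun v => ∀ w ∈ (G.neighborFinset v).filter (fun w => ¬ G.degree w < τ),
        f w = c s(v, w))).card ≤ τ ^ 2 := by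
  set L := Finset.univ.filter (fun v : Fin n => G.degree v < τ) with hL
  set S := L.filter (fun v => ∀ w ∈ (G.neighborFinset v).filter (fun w => ¬ G.degree w < τ),
        f w = c s(v, w)) with hS
  rcases S.eq_empty_or_nonempty with h | ⟨v₀, hv₀⟩
  · simp [h]
  · set W := (G.neighborFinset v₀).filter (fun w => G.degree w < τ) with hW
    have hsub : S ⊆ insert v₀ ((G.neighborFinset v₀) ∪ W.biUnion (fun w => G.neighborFinset w)) := by
      intro v hv
      by_cases hvv : v = v₀
      · simp [hvv]
      · rcases hcov v₀ v (Ne.symm hvv) with hadj | ⟨w, hw1, hw2, hw3⟩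
        · exact Finset.mem_insert_of_mem (Finset.mem_union_left _
            (by simpa [SimpleGraph.mem_neighborFinset] using hadj))
        · by_cases hdw : G.degree w < τ
          · refine Finset.mem_insert_of_mem (Finset.mem_union_right _ ?_)
            refine Finset.mem_biUnion.mpr ⟨w, ?_, ?_⟩
            · exact Finset.mem_filter.mpr ⟨by simpa [SimpleGraph.mem_neighborFinset] using hw1, hdw⟩
            · simpa [SimpleGraph.mem_neighborFinset] using hw2
          · exfalso
            have h0 : f w = c s(v₀, w) := by
              have := (Finset.mem_filter.mp hv₀).2
              exact this w (Finset.mem_filter.mpr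
                ⟨by simpa [SimpleGraph.mem_neighborFinset] using hw1, hdw⟩)
            have h1 : f w = c s(v, w) := by
              have := (Finset.mem_filter.mp hv).2
              exact this w (Finset.mem_filter.mpr
                ⟨by simpa [SimpleGraph.mem_neighborFinset] using hw2.symm, hdw⟩)
            rw [Sym2.eq_swap] at h1
            exact hw3 (h0 ▸ h1)
    have hd : G.degree v₀ < τ := by
      have := Finset.mem_filter.mp ((Finset.mem_filter.mp hv₀).1)
      simpa using this.2
    have hWcard : W.card ≤ τ - 1 := by
      calc W.card ≤ (G.neighborFinset v₀).card := Finset.card_filter_le _ _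
        _ = G.degree v₀ := SimpleGraph.card_neighborFinset_eq_degree _ _
        _ ≤ τ - 1 := by omega
    have hbi : (W.biUnion (fun w => G.neighborFinset w)).card ≤ (τ - 1) * (τ - 1) := by
      calc (W.biUnion (fun w => G.neighborFinset w)).card
          ≤ ∑ w ∈ W, (G.neighborFinset w).card := Finset.card_biUnion_le
        _ ≤ ∑ _w ∈ W, (τ - 1) := by
            refine Finset.sum_le_sum ?_
            intro w hw
            have : G.degree w < τ := (Finset.mem_filter.mp hw).2
            rw [SimpleGraph.card_neighborFinset_eq_degree]
            omega
        _ = W.card * (τ - 1) := by simp [mul_comm]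
        _ ≤ (τ - 1) * (τ - 1) := Nat.mul_le_mul_right _ hWcard
    calc S.card ≤ (insert v₀ ((G.neighborFinset v₀) ∪ W.biUnion (fun w => G.neighborFinset w))).card :=
        Finset.card_le_card hsub
      _ ≤ ((G.neighborFinset v₀) ∪ W.biUnion (fun w => G.neighborFinset w)).card + 1 :=
        Finset.card_insert_le _ _
      _ ≤ ((G.neighborFinset v₀).card + (W.biUnion (fun w => G.neighborFinset w)).card) + 1 := by
        have := Finset.card_union_le (G.neighborFinset v₀) (W.biUnion (fun w => G.neighborFinset w))
        omega
      _ ≤ ((τ - 1) + (τ - 1) * (τ - 1)) + 1 := by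
        have h1 : (G.neighborFinset v₀).card ≤ τ - 1 := by
          rw [SimpleGraph.card_neighborFinset_eq_degree]; omega
        omega
      _ ≤ τ ^ 2 := by nlinarith [Nat.sub_add_cancel hτ, Nat.sub_le τ 1]

open Real in
/-- Jensen / AM-GM: from a bound on the sum of `2^{-a v}` deduce a lower bound
on the sum of `a v`. -/
lemma jensen_aux (L : Finset (Fin n)) (hL : L.Nonempty) (a : Fin n → ℕ) (A : ℝ)
    (hA : 0 < A) (h : ∑ v ∈ L, (2:ℝ) ^ (-(a v : ℝ)) ≤ A) :
    (L.card : ℝ) * Real.logb 2 (L.card / A) ≤ ∑ v ∈ L, (a v : ℝ) := by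
  set s : ℝ := (L.card : ℝ) with hs
  have hs0 : 0 < s := by
    have h0 : 0 < L.card := Finset.card_pos.mpr hL
    rw [hs]
    exact_mod_cast h0
  set S : ℝ := ∑ v ∈ L, (a v : ℝ) with hSdef
  have key : (2:ℝ) ^ (-(S / s)) ≤ A / s := by
    have amgm := Real.geom_mean_le_arith_mean_weighted L (fun _ => s⁻¹)
      (fun v => (2:ℝ) ^ (-(a v : ℝ)))
      (fun i _ => by positivity)
      (by simp [hs]; field_simp)
      (fun i _ => by positivity)
    have hprod : ∏ v ∈ L, ((2:ℝ) ^ (-(a v : ℝ))) ^ s⁻¹ = (2:ℝ) ^ (-(S / s)) := by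
      have h1 : ∀ v ∈ L, ((2:ℝ) ^ (-(a v : ℝ))) ^ s⁻¹ = (2:ℝ) ^ (-(a v : ℝ) * s⁻¹) := by
        intro v _
        rw [← Real.rpow_mul (by norm_num : (0:ℝ) ≤ 2)]
      rw [Finset.prod_congr rfl h1]
      rw [← Real.rpow_sum_of_pos (by norm_num : (0:ℝ) < 2)]
      congr 1
      rw [← Finset.sum_mul, div_eq_mul_inv, ← neg_mul, hSdef, ← Finset.sum_neg_distrib]
    have hsum : ∑ v ∈ L, s⁻¹ * ((2:ℝ) ^ (-(a v : ℝ))) ≤ A / s := by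
      rw [← Finset.mul_sum, div_eq_inv_mul]
      exact mul_le_mul_of_nonneg_left h (by positivity)
    calc (2:ℝ) ^ (-(S / s)) = ∏ v ∈ L, ((2:ℝ) ^ (-(a v : ℝ))) ^ s⁻¹ := hprod.symm
      _ ≤ ∑ v ∈ L, s⁻¹ * ((2:ℝ) ^ (-(a v : ℝ))) := amgm
      _ ≤ A / s := hsum
  have hlog : -(S / s) ≤ Real.logb 2 (A / s) := by
    have h2 := (Real.logb_le_logb (b := 2) one_lt_two
      (by positivity : (0:ℝ) < (2:ℝ) ^ (-(S/s))) (by positivity : (0:ℝ) < A / s)).mpr key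
    rwa [Real.logb_rpow (by norm_num : (0:ℝ) < 2) (by norm_num : (2:ℝ) ≠ 1)] at h2
  have h1 : Real.logb 2 (s/A) = - Real.logb 2 (A/s) := by
    rw [Real.logb_div (ne_of_gt hs0) (ne_of_gt hA), Real.logb_div (ne_of_gt hA) (ne_of_gt hs0)]
    ring
  rw [h1]
  rw [← neg_div, div_le_iff₀ hs0] at hlog
  nlinarith [hlog]

/-- double counting: the number of edges into the high set -/
lemma sum_inter_le (H : Finset (Fin n)) (L : Finset (Fin n)) :
    ∑ v ∈ L, ((G.neighborFinset v) ∩ H).card ≤ ∑ w ∈ H, G.degree w := by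
  have h1 : ∀ v, ((G.neighborFinset v) ∩ H).card = ∑ w ∈ H, if G.Adj v w then 1 else 0 := by
    intro v
    rw [← Finset.card_filter]
    congr 1
    ext w
    simp [Finset.mem_inter, SimpleGraph.mem_neighborFinset, and_comm]
  calc ∑ v ∈ L, ((G.neighborFinset v) ∩ H).card
      ≤ ∑ v : Fin n, ((G.neighborFinset v) ∩ H).card :=
        Finset.sum_le_sum_of_subset (Finset.subset_univ L)
    _ = ∑ v : Fin n, ∑ w ∈ H, if G.Adj v w then 1 else 0 := by
        exact Finset.sum_congr rfl (fun v _ => h1 v)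
    _ = ∑ w ∈ H, ∑ v : Fin n, if G.Adj v w then 1 else 0 := Finset.sum_comm
    _ = ∑ w ∈ H, G.degree w := by
        refine Finset.sum_congr rfl (fun w _ => ?_)
        rw [← Finset.card_filter, SimpleGraph.degree]
        congr 1
        ext v
        simp [SimpleGraph.mem_neighborFinset, G.adj_comm]

/-- conversion to real: from the counting bound to the 2^{-a} bound -/
lemma real_sum_bound (L : Finset (Fin n)) (a : Fin n → ℕ) (B : ℕ)
    (ha : ∀ v ∈ L, a v ≤ n) (h : ∑ v ∈ L, 2 ^ (n - a v) ≤ 2 ^ n * B) :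
    ∑ v ∈ L, (2:ℝ) ^ (-(a v : ℝ)) ≤ B := by
  have key : ∀ v ∈ L, (2:ℝ) ^ (-(a v : ℝ)) = ((2:ℕ) ^ (n - a v) : ℝ) / (2:ℝ) ^ n := by
    intro v hv
    have hva := ha v hv
    push_cast
    rw [pow_sub₀ (2:ℝ) (by norm_num) hva]
    rw [Real.rpow_neg (by norm_num), Real.rpow_natCast]
    field_simp
  rw [Finset.sum_congr rfl key, ← Finset.sum_div]
  rw [div_le_iff₀ (by positivity)]
  have hcast : ((∑ v ∈ L, 2 ^ (n - a v) : ℕ) : ℝ) ≤ ((2 ^ n * B : ℕ) : ℝ) := by exact_mod_cast h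
  push_cast at hcast
  calc (∑ v ∈ L, (2:ℝ) ^ (n - a v)) ≤ (2:ℝ) ^ n * B := by push_cast; exact hcast
    _ = (B:ℝ) * 2 ^ n := by ring

/-- a 2-rainbow connected coloring yields the coverage property -/
lemma cov_of_rainbow (G' : SimpleGraph (Fin n)) (c : Sym2 (Fin n) → Fin 2)
    (hc : ∀ u v : Fin n, u ≠ v →
      ∃ p : G'.Walk u v, p.IsPath ∧ (p.edges.map c).Nodup) :
    Cov G' c := by
  intro u v huv
  obtain ⟨p, hip, hnd⟩ := hc u v huv
  have hlen : p.length ≤ 2 := by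
    have h1 : (p.edges.map c).length ≤ 2 := by
      simpa using hnd.length_le_card
    simpa using h1
  cases p with
  | nil => exact absurd rfl huv
  | cons h q =>
    rename_i w
    cases q with
    | nil => exact Or.inl h
    | cons h' r =>
      rename_i x
      cases r with
      | nil =>
        right
        refine ⟨w, h, h', ?_⟩
        simp only [SimpleGraph.Walk.edges_cons, SimpleGraph.Walk.edges_nil,
          List.map_cons, List.map_nil, List.nodup_cons, List.mem_singleton] at hnd
        exact hnd.1
      | cons h'' r' =>
        exfalso
        simp only [SimpleGraph.Walk.length_cons] at hlen
        omega

lemma logb_crude {y : ℝ} (hy : 1 ≤ y) : Real.logb 2 y ≤ 1.5 * y := by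
  rw [Real.logb, div_le_iff₀ (Real.log_pos one_lt_two)]
  have h1 : Real.log y ≤ y - 1 := Real.log_le_sub_one_of_pos (by linarith)
  nlinarith [Real.log_two_gt_d9]

lemma logb_sqrt_crude {x : ℝ} (hx : 1 ≤ x) : Real.logb 2 x ≤ 3 * Real.sqrt x := by
  have h0 : (0:ℝ) ≤ x := by linarith
  have h2 : 1 ≤ Real.sqrt x := (Real.le_sqrt (by norm_num) h0).mpr (by nlinarith)
  have h3 : Real.logb 2 x = 2 * Real.logb 2 (Real.sqrt x) := by
    conv_lhs => rw [← Real.sq_sqrt h0]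
    rw [Real.logb_pow]
    norm_num
  rw [h3]
  have := logb_crude h2
  linarith

set_option maxHeartbeats 2000000 in
open Real in
lemma main_bound (hn : 2 ^ 1000 ≤ n) (c : Sym2 (Fin n) → Fin 2) (hcov : Cov G c) :
    (n : ℝ) * Real.logb 2 n - 4 * (n : ℝ) * Real.logb 2 (Real.logb 2 n) - 2 * (n : ℝ)
      ≤ (G.edgeFinset.card : ℝ) := by
  set m := G.edgeFinset.card with hmdef
  set ℓ : ℝ := Real.logb 2 n with hldef
  set Lg : ℝ := Real.logb 2 ℓ with hLgdef
  have hn2 : 2 ≤ n := le_trans (Nat.pow_le_pow_right (by norm_num) (by norm_num) : 2 ^ 1 ≤ 2 ^ 1000) hn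
  have hnR : (2:ℝ) ^ (1000:ℕ) ≤ (n:ℝ) := by exact_mod_cast hn
  have hnpos : (0:ℝ) < n := lt_of_lt_of_le (by positivity) hnR
  have hl1000 : (1000:ℝ) ≤ ℓ := by
    rw [hldef]
    have h2k : Real.logb 2 ((2:ℝ) ^ (1000:ℕ)) = 1000 := by
      rw [Real.logb_pow, Real.logb_self_eq_one one_lt_two]
      norm_num
    rw [← h2k]
    exact Real.logb_le_logb_of_le one_lt_two (by positivity) hnR
  have hlpos : (0:ℝ) < ℓ := by linarith
  have hLg4 : (4:ℝ) ≤ Lg := by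
    rw [hLgdef]
    have h16 : Real.logb 2 ((2:ℝ) ^ (4:ℕ)) = 4 := by
      rw [Real.logb_pow, Real.logb_self_eq_one one_lt_two]
      norm_num
    rw [← h16]
    exact Real.logb_le_logb_of_le one_lt_two (by positivity) (by norm_num; linarith)
  have hLgpos : (0:ℝ) < Lg := by linarith
  clear hn hnR
  -- easy case
  rcases le_or_gt ((n:ℝ) * ℓ) (m:ℝ) with hm | hm
  · nlinarith
  -- main case
  set k : ℕ := Nat.clog 2 n with hkdef
  have hk1 : 1 ≤ k := by
    rw [hkdef]
    exact Nat.clog_pos (by norm_num) hn2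
  have hk_low : ℓ ≤ (k:ℝ) := by
    have h1 : n ≤ 2 ^ k := Nat.le_pow_clog (by norm_num) n
    have h1R : (n:ℝ) ≤ (2:ℝ) ^ k := by exact_mod_cast h1
    have h2 : Real.logb 2 ((2:ℝ) ^ k) = k := by
      rw [Real.logb_pow, Real.logb_self_eq_one one_lt_two]
      norm_num
    rw [hldef, ← h2]
    exact Real.logb_le_logb_of_le one_lt_two hnpos h1R
  have hk_high : (k:ℝ) ≤ ℓ + 1 := by
    have h1 : 2 ^ (k - 1) < n := Nat.pow_pred_clog_lt_self (by norm_num) (by omega)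
    have h1R : (2:ℝ) ^ ((k-1:ℕ)) < (n:ℝ) := by exact_mod_cast h1
    have h2 : Real.logb 2 ((2:ℝ) ^ (k-1:ℕ)) = ((k-1:ℕ):ℝ) := by
      rw [Real.logb_pow, Real.logb_self_eq_one one_lt_two]
      norm_num
    have h3 : ((k-1:ℕ):ℝ) ≤ ℓ := by
      rw [hldef, ← h2]
      exact Real.logb_le_logb_of_le one_lt_two (by positivity) (le_of_lt h1R)
    have h4 : ((k-1:ℕ):ℝ) = (k:ℝ) - 1 := by
      have : (1:ℕ) ≤ k := hk1
      push_cast [Nat.cast_sub this]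
      ring
    linarith [h4 ▸ h3]
  set τ : ℕ := k ^ 2 with hτdef
  have hτ1 : 1 ≤ τ := by rw [hτdef]; exact Nat.one_le_pow _ _ hk1
  have hτlow : ℓ ^ 2 ≤ (τ:ℝ) := by
    have h0 : (τ:ℝ) = (k:ℝ)^2 := by rw [hτdef]; push_cast; ring
    nlinarith
  have hτhigh : (τ:ℝ) ≤ (2*ℓ) ^ 2 := by
    have h0 : (τ:ℝ) = (k:ℝ)^2 := by rw [hτdef]; push_cast; ring
    nlinarith
  have hτposR : (0:ℝ) < τ := by nlinarith
  -- the low and high vertex sets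
  set L : Finset (Fin n) := Finset.univ.filter (fun v => G.degree v < τ) with hLdef
  set Hs : Finset (Fin n) := Finset.univ.filter (fun v => ¬ G.degree v < τ) with hHdef
  have hLH : L.card + Hs.card = n := by
    rw [hLdef, hHdef, Finset.card_filter_add_card_filter_not]
    simp
  -- degree sum
  have hdeg2m : ∑ v : Fin n, G.degree v = 2 * m := by
    rw [hmdef]
    exact SimpleGraph.sum_degrees_eq_twice_card_edges G
  -- high set is small
  have hHsmall : (Hs.card : ℝ) * ℓ ≤ 2 * n := by
    have h1 : τ * Hs.card ≤ ∑ v ∈ Hs, G.degree v := by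
      rw [mul_comm]
      refine le_trans (le_of_eq ?_) (Finset.card_nsmul_le_sum Hs _ τ ?_)
      · simp [mul_comm]
      · intro v hv
        have := (Finset.mem_filter.mp hv).2
        omega
    have h2 : ∑ v ∈ Hs, G.degree v ≤ 2 * m := by
      rw [← hdeg2m]
      exact Finset.sum_le_sum_of_subset (Finset.subset_univ Hs)
    have h3 : (τ:ℝ) * Hs.card ≤ 2 * m := by exact_mod_cast le_trans h1 h2
    have h4 : (Hs.card:ℝ) * ℓ^2 ≤ 2 * n * ℓ := by nlinarith
    nlinarith [(Nat.cast_nonneg Hs.card : (0:ℝ) ≤ Hs.card)]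
  have hHn : (Hs.card : ℝ) ≤ n / 500 := by nlinarith [(Nat.cast_nonneg Hs.card : (0:ℝ) ≤ Hs.card), mul_le_mul_of_nonneg_left hl1000 (Nat.cast_nonneg Hs.card : (0:ℝ) ≤ Hs.card)]
  have hsn : (L.card : ℝ) = n - Hs.card := by
    have : (L.card:ℝ) + Hs.card = n := by exact_mod_cast hLH
    linarith
  have hs_half : (n:ℝ)/2 ≤ L.card := by nlinarith
  have hs_pos : (0:ℝ) < L.card := by nlinarith
  have hLne : L.Nonempty := by
    rw [← Finset.card_pos]
    exact_mod_cast hs_pos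
  have hs_le_n : (L.card : ℝ) ≤ n := by nlinarith [(Nat.cast_nonneg Hs.card : (0:ℝ) ≤ Hs.card)]
  -- Jensen applications
  have hdeg_le_n : ∀ v : Fin n, (G.neighborFinset v).card ≤ n := by
    intro v
    simpa using Finset.card_le_univ (G.neighborFinset v)
  have jensen1 : (L.card : ℝ) * Real.logb 2 (L.card / τ) ≤ ∑ v ∈ L, ((G.neighborFinset v).card : ℝ) := by
    refine jensen_aux L hLne _ (τ:ℝ) hτposR ?_
    refine real_sum_bound L _ τ (fun v _ => hdeg_le_n v) ?_
    exact sum_pow_le L (fun v => G.neighborFinset v) (fun v w => c s(v, w)) τ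
      (fun f => by
        have := surv_card_le_full G c hcov τ hτ1 f
        simpa only [hLdef] using this)
  have jensen2 : (L.card : ℝ) * Real.logb 2 (L.card / (τ:ℝ)^2) ≤
      ∑ v ∈ L, (((G.neighborFinset v).filter (fun w => ¬ G.degree w < τ)).card : ℝ) := by
    have hτ2 : (0:ℝ) < (τ:ℝ)^2 := by positivity
    refine jensen_aux L hLne _ ((τ:ℝ)^2) hτ2 ?_
    have hcast : ((τ^2 : ℕ) : ℝ) = (τ:ℝ)^2 := by push_cast; ring
    rw [← hcast]
    refine real_sum_bound L _ (τ^2)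
      (fun v _ => le_trans (Finset.card_le_card (Finset.filter_subset _ _)) (hdeg_le_n v)) ?_
    exact sum_pow_le L (fun v => (G.neighborFinset v).filter (fun w => ¬ G.degree w < τ))
      (fun v w => c s(v, w)) (τ^2)
      (fun f => by
        have := surv_card_le_high G c hcov τ hτ1 f
        simpa only [hLdef] using this)
  -- link the second sum with high degrees
  have hlink : ∑ v ∈ L, (((G.neighborFinset v).filter (fun w => ¬ G.degree w < τ)).card)
      ≤ ∑ w ∈ Hs, G.degree w := by
    have heq : ∀ v : Fin n, (G.neighborFinset v).filter (fun w => ¬ G.degree w < τ)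
        = (G.neighborFinset v) ∩ Hs := by
      intro v
      ext w
      simp [hHdef]
    calc ∑ v ∈ L, ((G.neighborFinset v).filter (fun w => ¬ G.degree w < τ)).card
        = ∑ v ∈ L, ((G.neighborFinset v) ∩ Hs).card := by
          exact Finset.sum_congr rfl (fun v _ => by rw [heq])
      _ ≤ ∑ w ∈ Hs, G.degree w := sum_inter_le G Hs L
  -- split the degree sum
  have hsplit : ∑ v ∈ L, G.degree v + ∑ v ∈ Hs, G.degree v = 2 * m := by
    rw [← hdeg2m, hLdef, hHdef]
    exact Finset.sum_filter_add_sum_filter_not _ _ _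
  -- put everything together over the reals
  have hreal1 : (L.card : ℝ) * Real.logb 2 (L.card / τ) ≤ ∑ v ∈ L, (G.degree v : ℝ) := by
    convert jensen1 using 2
    rw [SimpleGraph.card_neighborFinset_eq_degree]
  have hsum_cast : ∑ v ∈ L, (G.degree v : ℝ) + ∑ v ∈ Hs, (G.degree v : ℝ) = 2 * m := by
    exact_mod_cast hsplit
  have hhigh : (L.card : ℝ) * Real.logb 2 (L.card / (τ:ℝ)^2) ≤ ∑ v ∈ Hs, (G.degree v : ℝ) := by
    refine le_trans jensen2 ?_
    exact_mod_cast hlink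
  have htotal : (L.card : ℝ) * (Real.logb 2 (L.card / τ) + Real.logb 2 (L.card / (τ:ℝ)^2))
      ≤ 2 * m := by
    rw [mul_add]
    linarith
  -- now estimate the logarithms
  have hlogs : Real.logb 2 ((L.card:ℝ) / τ) = Real.logb 2 (L.card:ℝ) - Real.logb 2 (τ:ℝ) :=
    Real.logb_div (by positivity) (by positivity)
  have hlogs2 : Real.logb 2 ((L.card:ℝ) / (τ:ℝ)^2)
      = Real.logb 2 (L.card:ℝ) - 2 * Real.logb 2 (τ:ℝ) := by
    rw [Real.logb_div (by positivity) (by positivity), Real.logb_pow]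
    ring
  have hlogL : ℓ - 1 ≤ Real.logb 2 (L.card:ℝ) := by
    have h1 : Real.logb 2 ((n:ℝ)/2) ≤ Real.logb 2 (L.card:ℝ) :=
      Real.logb_le_logb_of_le one_lt_two (by positivity) hs_half
    have h2 : Real.logb 2 ((n:ℝ)/2) = ℓ - 1 := by
      rw [Real.logb_div (by positivity) (by norm_num), Real.logb_self_eq_one one_lt_two, hldef]
    linarith
  have hlogτ : Real.logb 2 (τ:ℝ) ≤ 2 + 2 * Lg := by
    have h1 : Real.logb 2 (τ:ℝ) ≤ Real.logb 2 ((2*ℓ)^2) :=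
      Real.logb_le_logb_of_le one_lt_two hτposR hτhigh
    have h2 : Real.logb 2 ((2*ℓ)^(2:ℕ)) = 2 * (1 + Lg) := by
      rw [Real.logb_pow]
      rw [Real.logb_mul (by norm_num) (by positivity), Real.logb_self_eq_one one_lt_two, hLgdef]
      push_cast
      ring
    rw [h2] at h1
    linarith
  -- positivity of the bracket
  have hbracket : 0 ≤ 2*ℓ - 8 - 6*Lg := by
    have h1 : Lg ≤ 3 * Real.sqrt ℓ := by
      rw [hLgdef]
      exact logb_sqrt_crude (by linarith)
    have h2 : (31:ℝ) ≤ Real.sqrt ℓ := (Real.le_sqrt (by norm_num) (by positivity)).mpr (by nlinarith)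
    have h3 : Real.sqrt ℓ * Real.sqrt ℓ = ℓ := Real.mul_self_sqrt (by positivity)
    nlinarith
  -- final computation
  have hfinal : 2 * (n:ℝ) * ℓ - 6 * n * Lg - 12 * n ≤ 2 * m := by
    have hb1 : Real.logb 2 ((L.card:ℝ)/τ) + Real.logb 2 ((L.card:ℝ)/(τ:ℝ)^2)
        ≥ 2*ℓ - 8 - 6*Lg := by
      rw [hlogs, hlogs2]
      linarith
    have hsl : (L.card:ℝ) * ℓ ≥ n * ℓ - 2*n := by nlinarith
    nlinarith [hs_le_n, hs_pos]
  nlinarith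


/-- For sufficiently large `n`, `t(n,2) ≥ n log₂ n - 4 n log₂ log₂ n - 2n`. -/
theorem t_n_two_lower : ∃ N : ℕ, ∀ n : ℕ, N ≤ n →
    (n : ℝ) * Real.logb 2 n - 4 * (n : ℝ) * Real.logb 2 (Real.logb 2 n) - 2 * (n : ℝ) ≤
      (minRainbowEdges n 2 : ℝ) := by
  refine ⟨2 ^ 1000, fun n hn => ?_⟩
  classical
  have hne : {m | ∃ G : SimpleGraph (Fin n), G.edgeSet.ncard = m ∧ IsRainbowConnected G 2}.Nonempty := by
    refine ⟨(⊤ : SimpleGraph (Fin n)).edgeSet.ncard, ⟨⊤, rfl, ?_⟩⟩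
    refine ⟨fun _ => 0, fun u v huv => ?_⟩
    have hadj : (⊤ : SimpleGraph (Fin n)).Adj u v := by simpa using huv
    refine ⟨SimpleGraph.Walk.cons hadj SimpleGraph.Walk.nil, ?_, ?_⟩
    · simp [SimpleGraph.Walk.isPath_def, huv]
    · simp
  have hmem : minRainbowEdges n 2 ∈
      {m | ∃ G : SimpleGraph (Fin n), G.edgeSet.ncard = m ∧ IsRainbowConnected G 2} :=
    Nat.sInf_mem hne
  obtain ⟨G, hGcard, cc, hcc⟩ := hmem
  letI : DecidableRel G.Adj := Classical.decRel _
  have hcount : G.edgeSet.ncard = G.edgeFinset.card := by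
    rw [← SimpleGraph.coe_edgeFinset, Set.ncard_coe_finset]
  have hcov : Cov G cc := cov_of_rainbow G cc hcc
  have := main_bound G hn cc hcov
  rw [← hGcard, hcount]
  exact this
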